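/- The polynomial 432x^8 + 448x^7 - 852x^6 + 588x^5 - 72x^4 - 504x^3 + 135x^2 + 108x - 27 has a real root in the open interval (0.242, 0.2421), and this root is its smallest positive real root. -/

import Mathlib

theorem stmt_4 :
    let p : ℝ → ℝ := fun x =>
      432*x^8 + 448*x^7 - 852*x^6 + 588*x^5 - 72*x^4 - 504*x^3 + 135*x^2 + 108*x - 27
    ∃ x ∈ Set.Ioo (0.242 : ℝ) 0.2421,
      p x = 0 ∧ ∀ y : ℝ, 0 < y → p y = 0 → x ≤ y := by
  intro p
  have hc : Continuous p := by unfold p; fun_prop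
  have hd : ∀ y : ℝ, HasDerivAt p
      (432*(8*y^7) + 448*(7*y^6) - 852*(6*y^5) + 588*(5*y^4) - 72*(4*y^3)
        - 504*(3*y^2) + 135*(2*y) + 108*1) y := by
    intro y
    have h1 := (hasDerivAt_pow 8 y).const_mul (432:ℝ)
    have h2 := (hasDerivAt_pow 7 y).const_mul (448:ℝ)
    have h3 := (hasDerivAt_pow 6 y).const_mul (852:ℝ)
    have h4 := (hasDerivAt_pow 5 y).const_mul (588:ℝ)
    have h5 := (hasDerivAt_pow 4 y).const_mul (72:ℝ)
    have h6 := (hasDerivAt_pow 3 y).const_mul (504:ℝ)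
    have h7 := (hasDerivAt_pow 2 y).const_mul (135:ℝ)
    have h8 := (hasDerivAt_id y).const_mul (108:ℝ)
    have := (((((((h1.add h2).sub h3).add h4).sub h5).sub h6).add h7).add h8).sub_const (27:ℝ)
    convert this using 1
    all_goals first
      | (push_cast; ring1)
      | (funext x; show p x = _; unfold p; simp only [Pi.add_apply, Pi.sub_apply, id]; ring)
      | rfl
  have hmono : StrictMonoOn p (Set.Icc (0:ℝ) 0.2421) := by
    apply strictMonoOn_of_deriv_pos (convex_Icc _ _) hc.continuousOn
    intro y hy
    rw [interior_Icc, Set.mem_Ioo] at hy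
    rw [(hd y).deriv]
    nlinarith [hy.1, hy.2, sq_nonneg y, pow_nonneg hy.1.le 3, pow_nonneg hy.1.le 4,
      pow_nonneg hy.1.le 5, pow_nonneg hy.1.le 6, pow_nonneg hy.1.le 7,
      pow_le_pow_left₀ hy.1.le hy.2.le 2, pow_le_pow_left₀ hy.1.le hy.2.le 3,
      pow_le_pow_left₀ hy.1.le hy.2.le 5]
  have h1 : p 0.242 < 0 := by unfold p; norm_num
  have h2 : (0:ℝ) < p 0.2421 := by unfold p; norm_num
  obtain ⟨x, hx, hpx⟩ := intermediate_value_Ioo (by norm_num : (0.242:ℝ) ≤ 0.2421)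
    hc.continuousOn (by rw [Set.mem_Ioo]; exact ⟨h1, h2⟩)
  refine ⟨x, hx, hpx, ?_⟩
  intro y hy hpy
  by_contra hlt
  push_neg at hlt
  have hyI : y ∈ Set.Icc (0:ℝ) 0.2421 := ⟨hy.le, by linarith [hx.2]⟩
  have hxI : x ∈ Set.Icc (0:ℝ) 0.2421 := ⟨by linarith [hx.1], hx.2.le⟩
  have := hmono hyI hxI hlt
  rw [hpy, hpx] at this
  exact lt_irrefl 0 this
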